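/- Let v ≥ 1 and N > v be integers, and let d_1, …, d_v be nonnegative integers, not all zero. Then Σ_{1≤j,k≤v} B(d_j − d_k) − N · Σ_{j=1}^{v} B(d_j) < (v − N) · Σ_{j=1}^{v} d_j, where B(m) = m(m+1)/2 for integers m ≥ 0 and B(m) = 0 for m < 0. -/
import Mathlib


/-- `Bb m = m(m+1)/2` for `m ≥ 0` and `Bb m = 0` for `m < 0`;
equivalently `Bb m` is the binomial coefficient `C(m+1, 2)` with the
convention `C(a, 2) = 0` for `a ≤ 0`. -/
def Bb (m : ℤ) : ℤ := if 0 ≤ m then m * (m + 1) / 2 else 0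

lemma Bb_nonneg (m : ℤ) : 0 ≤ Bb m := by
  unfold Bb
  split
  · exact Int.ediv_nonneg (by nlinarith) (by norm_num)
  · exact le_refl 0

lemma Bb_zero : Bb 0 = 0 := by simp [Bb]

lemma Bb_mono {a b : ℤ} (hb : 0 ≤ b) (hab : a ≤ b) : Bb a ≤ Bb b := by
  unfold Bb
  by_cases ha : 0 ≤ a
  · simp only [if_pos ha, if_pos hb]
    exact Int.ediv_le_ediv (by norm_num) (by nlinarith)
  · simp only [if_neg ha, if_pos hb]
    exact Int.ediv_nonneg (by nlinarith) (by norm_num)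

lemma self_le_Bb {m : ℤ} (hm : 0 ≤ m) : m ≤ Bb m := by
  unfold Bb
  rw [if_pos hm, Int.le_ediv_iff_mul_le (by norm_num)]
  have h : m = 0 ∨ 1 ≤ m := by omega
  rcases h with h | h <;> nlinarith

/-- If `v ≥ 1`, `N > v`, and `d_1, …, d_v` are nonnegative integers, not all zero,
then `Σ_{1≤j,k≤v} B(d_j − d_k) − N · Σ_j B(d_j) < (v − N) · Σ_j d_j`. -/
theorem sum_B_sub_lt_of_lt (v N : ℕ) (hv : 1 ≤ v) (hN : v < N)
    (d : Fin v → ℕ) (hd : ∃ j, d j ≠ 0) :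
    (∑ j, ∑ k, Bb ((d j : ℤ) - (d k : ℤ))) - (N : ℤ) * ∑ j, Bb (d j : ℤ)
      < ((v : ℤ) - (N : ℤ)) * ∑ j, (d j : ℤ) := by
  set S : ℤ := ∑ j, Bb (d j : ℤ) with hS
  set D : ℤ := ∑ j, (d j : ℤ) with hD
  have hDS : D ≤ S := Finset.sum_le_sum fun j _ => self_le_Bb (by positivity)
  have hD1 : 1 ≤ D := by
    obtain ⟨j, hj⟩ := hd
    have : (1 : ℤ) ≤ (d j : ℤ) := by exact_mod_cast Nat.one_le_iff_ne_zero.mpr hj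
    calc (1 : ℤ) ≤ (d j : ℤ) := this
      _ ≤ D := Finset.single_le_sum (f := fun k => ((d k : ℤ)))
          (fun k _ => by positivity) (Finset.mem_univ j)
  have hT : (∑ j, ∑ k, Bb ((d j : ℤ) - (d k : ℤ))) ≤ ((v : ℤ) - 1) * S := by
    have h1 : ∀ j : Fin v, (∑ k, Bb ((d j : ℤ) - (d k : ℤ)))
        ≤ ((v : ℤ) - 1) * Bb (d j : ℤ) := by
      intro j
      have h2 : (∑ k, Bb ((d j : ℤ) - (d k : ℤ)))
          ≤ ∑ k : Fin v, (if k = j then 0 else Bb (d j : ℤ)) := by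
        apply Finset.sum_le_sum
        intro k _
        by_cases hk : k = j
        · simp [hk, Bb_zero]
        · rw [if_neg hk]
          exact Bb_mono (by positivity) (by
            have : (0 : ℤ) ≤ (d k : ℤ) := by positivity
            linarith)
      have h3 : (∑ k : Fin v, (if k = j then 0 else Bb (d j : ℤ)))
          = ((v : ℤ) - 1) * Bb (d j : ℤ) := by
        have he : ∀ k : Fin v, (if k = j then (0:ℤ) else Bb (d j : ℤ))
            = Bb (d j : ℤ) - (if k = j then Bb (d j : ℤ) else 0) := by
          intro k; split <;> ring
        rw [Finset.sum_congr rfl (fun k _ => he k), Finset.sum_sub_distrib,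
          Finset.sum_ite_eq' Finset.univ j, if_pos (Finset.mem_univ j),
          Finset.sum_const, Finset.card_univ, Fintype.card_fin]
        simp [nsmul_eq_mul]; ring
      exact h2.trans (le_of_eq h3)
    calc (∑ j, ∑ k, Bb ((d j : ℤ) - (d k : ℤ)))
        ≤ ∑ j, ((v : ℤ) - 1) * Bb (d j : ℤ) := Finset.sum_le_sum fun j _ => h1 j
      _ = ((v : ℤ) - 1) * S := by rw [Finset.mul_sum]
  have hvN : (v : ℤ) < (N : ℤ) := by exact_mod_cast hN
  nlinarith [mul_nonneg (by linarith : (0:ℤ) ≤ (N:ℤ) + 1 - (v:ℤ)) (by linarith : (0:ℤ) ≤ S - D)]
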